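/- For all m ≥ 1 and n ≥ 1, the IC-index of the complete (n+1)-partite graph K_{1(n),m} satisfies M(K_{1(n),m}) ≥ 2^{m+n} − 2^m + 1. -/

import Mathlib

/-- The join `H₀ ∨ H₁` of two graphs: all edges of `H₀`, all edges of `H₁`, and all
pairs with one endpoint in each. -/
def graphJoin {α β : Type*} (G : SimpleGraph α) (H : SimpleGraph β) :
    SimpleGraph (α ⊕ β) where
  Adj x y :=
    match x, y with
    | Sum.inl a, Sum.inl b => G.Adj a b
    | Sum.inr a, Sum.inr b => H.Adj a b
    | Sum.inl _, Sum.inr _ => True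
    | Sum.inr _, Sum.inl _ => True
  symm := by
    constructor
    rintro (a | a) (b | b) h
    · exact G.symm.symm _ _ h
    · trivial
    · trivial
    · exact H.symm.symm _ _ h
  loopless := by
    constructor
    rintro (a | a) h
    · exact G.loopless.irrefl a h
    · exact H.loopless.irrefl a h

/-- A coloring `f : V(G) → ℕ` (positive-valued) is an IC-coloring if every integer
`k` with `1 ≤ k ≤ f(G)` is the `f`-sum of some nonempty vertex subset inducing a
connected subgraph. -/
def IsICColoring {α : Type*} [Fintype α] (G : SimpleGraph α) (f : α → ℕ) : Prop :=
  (∀ v, 0 < f v) ∧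
    ∀ k : ℕ, 1 ≤ k → k ≤ ∑ v, f v →
      ∃ S : Finset α, S.Nonempty ∧ (G.induce (S : Set α)).Connected ∧
        ∑ v ∈ S, f v = k

/-- The IC-index `M(G)`: the maximum of `f(G)` over all IC-colorings `f` of `G`. -/
noncomputable def ICIndex {α : Type*} [Fintype α] (G : SimpleGraph α) : ℕ :=
  sSup {t | ∃ f : α → ℕ, IsICColoring G f ∧ ∑ v, f v = t}

/-- `K_{1(n),m} = O_m ∨ K_n`: the complete `(n+1)`-partite graph with `n` parts of
size one and one part (`V₀ = Fin m`, the left summand) of size `m`. -/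
def K1nm (m n : ℕ) : SimpleGraph (Fin m ⊕ Fin n) :=
  graphJoin (⊥ : SimpleGraph (Fin m)) (⊤ : SimpleGraph (Fin n))

/-- the IC-coloring. -/
def icf (m n : ℕ) : Fin m ⊕ Fin n → ℕ
  | .inl j => (2 ^ n - 1) * 2 ^ (j : ℕ) + (if (j : ℕ) = m - 1 then 1 else 0)
  | .inr i => 2 ^ (i : ℕ)

lemma sum_testBit_range (q n : ℕ) :
    ∑ i ∈ Finset.range n, (if q.testBit i then 2 ^ i else 0) = q % 2 ^ n := by
  induction n with
  | zero => simp [Nat.mod_one]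
  | succ n ih =>
    rw [Finset.sum_range_succ, ih, Nat.pow_succ, Nat.mod_mul, Nat.testBit_eq_decide_div_mod_eq]
    rcases Nat.mod_two_eq_zero_or_one (q / 2 ^ n) with h | h <;> simp [h]

lemma induce_connected_of_hub {V : Type*} (G : SimpleGraph V) (s : Set V) (hub : V)
    (hh : hub ∈ s) (hadj : ∀ v ∈ s, v ≠ hub → G.Adj hub v) :
    (G.induce s).Connected := by
  rw [SimpleGraph.connected_iff]
  have key : ∀ w : s, (G.induce s).Reachable w ⟨hub, hh⟩ := by
    rintro ⟨w, hw⟩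
    by_cases hwh : w = hub
    · subst hwh; exact SimpleGraph.Reachable.refl _
    · exact SimpleGraph.Adj.reachable ((hadj w hw hwh).symm)
  exact ⟨fun u v => (key u).trans (key v).symm, ⟨⟨hub, hh⟩⟩⟩

lemma icIndex_bddAbove {α : Type*} [Fintype α] [DecidableEq α] (G : SimpleGraph α) :
    BddAbove {t | ∃ f : α → ℕ, IsICColoring G f ∧ ∑ v, f v = t} := by
  classical
  refine ⟨2 ^ Fintype.card α, ?_⟩
  rintro t ⟨f, ⟨hpos, hcov⟩, rfl⟩
  set t := ∑ v, f v with ht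
  have : ∀ k ∈ Finset.Icc 1 t, ∃ S : Finset α, ∑ v ∈ S, f v = k := by
    intro k hk
    rw [Finset.mem_Icc] at hk
    obtain ⟨S, _, _, hS⟩ := hcov k hk.1 hk.2
    exact ⟨S, hS⟩
  choose g hg using this
  have hinj : ∀ k₁ hk₁ k₂ hk₂, g k₁ hk₁ = g k₂ hk₂ → k₁ = k₂ := by
    intro k₁ hk₁ k₂ hk₂ h
    rw [← hg k₁ hk₁, ← hg k₂ hk₂, h]
  have hcard : (Finset.Icc 1 t).card ≤ (Finset.univ : Finset (Finset α)).card := by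
    classical
    set g' : ℕ → Finset α := fun k => if h : k ∈ Finset.Icc 1 t then g k h else ∅ with hg'
    refine Finset.card_le_card_of_injOn g' (fun a _ => Finset.mem_univ _) ?_
    intro k₁ hk₁ k₂ hk₂ h
    simp only [Finset.mem_coe] at hk₁ hk₂
    simp only [hg', dif_pos hk₁, dif_pos hk₂] at h
    exact hinj k₁ hk₁ k₂ hk₂ h
  simpa [Nat.card_Icc, Finset.card_univ, Fintype.card_finset] using hcard

lemma two_pow_sum (m : ℕ) : ∑ i ∈ Finset.range m, 2 ^ i = 2 ^ m - 1 := by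
  induction m with
  | zero => simp
  | succ m ih =>
    rw [Finset.sum_range_succ, ih, Nat.pow_succ]
    have : 1 ≤ 2 ^ m := Nat.one_le_two_pow
    omega

/-- the total sum of the coloring -/
lemma icf_total (m n : ℕ) (hm : 1 ≤ m) :
    ∑ v, icf m n v = (2 ^ n - 1) * 2 ^ m + 1 := by
  rw [Fintype.sum_sum_type]
  have hl : ∑ j : Fin m, icf m n (Sum.inl j)
      = (2 ^ n - 1) * (2 ^ m - 1) + 1 := by
    simp only [icf]
    rw [Finset.sum_add_distrib, ← Finset.mul_sum]
    rw [Fin.sum_univ_eq_sum_range (fun j => (2:ℕ) ^ j),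
      Fin.sum_univ_eq_sum_range (fun j => if j = m - 1 then 1 else 0),
      two_pow_sum, Finset.sum_ite_eq' (Finset.range m) (m-1) (fun _ => 1)]
    rw [if_pos (Finset.mem_range.mpr (by omega))]
  have hr : ∑ i : Fin n, icf m n (Sum.inr i) = 2 ^ n - 1 := by
    simp only [icf]
    rw [Fin.sum_univ_eq_sum_range (fun i => (2:ℕ) ^ i), two_pow_sum]
  rw [hl, hr]
  have h1 : 1 ≤ 2 ^ m := Nat.one_le_two_pow
  have h2 : 1 ≤ 2 ^ n := Nat.one_le_two_pow
  have h3 : (2 ^ n - 1) * 1 ≤ (2 ^ n - 1) * 2 ^ m := Nat.mul_le_mul_left _ h1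
  rw [mul_one] at h3
  have : (2 ^ n - 1) * 2 ^ m = (2 ^ n - 1) * (2 ^ m - 1) + (2 ^ n - 1) := by
    rw [Nat.mul_sub, mul_one]
    omega
  omega

/-- A connected subset realizing `(2^n-1)*q + testBit q (m-1) + r`. -/
lemma icf_cover (m n q r : ℕ) (hm : 1 ≤ m) (hq : q < 2 ^ m) (hr1 : 1 ≤ r) (hrn : r < 2 ^ n) :
    ∃ S : Finset (Fin m ⊕ Fin n), S.Nonempty ∧
      ((K1nm m n).induce (S : Set (Fin m ⊕ Fin n))).Connected ∧
      ∑ v ∈ S, icf m n v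
        = (2 ^ n - 1) * q + (if q.testBit (m - 1) then 1 else 0) + r := by
  classical
  set L : Finset (Fin m ⊕ Fin n) :=
    (Finset.univ.filter fun j : Fin m => q.testBit (j : ℕ)).map
      ⟨Sum.inl, Sum.inl_injective⟩ with hL
  set R : Finset (Fin m ⊕ Fin n) :=
    (Finset.univ.filter fun i : Fin n => r.testBit (i : ℕ)).map
      ⟨Sum.inr, Sum.inr_injective⟩ with hR
  have hRne : (Finset.univ.filter fun i : Fin n => r.testBit (i : ℕ)).Nonempty := by
    by_contra h
    rw [Finset.not_nonempty_iff_eq_empty, Finset.filter_eq_empty_iff] at h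
    have : ∑ i ∈ Finset.range n, (if r.testBit i then 2 ^ i else 0) = 0 := by
      refine Finset.sum_eq_zero fun i hi => ?_
      rw [Finset.mem_range] at hi
      have := h (Finset.mem_univ (⟨i, hi⟩ : Fin n))
      simp only [Bool.not_eq_true] at this
      simp [this]
    rw [sum_testBit_range, Nat.mod_eq_of_lt hrn] at this
    omega
  obtain ⟨i0, hi0⟩ := hRne
  rw [Finset.mem_filter] at hi0
  refine ⟨L ∪ R, ?_, ?_, ?_⟩
  · exact ⟨Sum.inr i0, Finset.mem_union_right _ (by simp [hR, hi0.2])⟩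
  · apply induce_connected_of_hub _ _ (Sum.inr i0)
    · simp [hR, hi0.2]
    · rintro (j | i) hv hne
      · show (K1nm m n).Adj (Sum.inr i0) (Sum.inl j)
        exact trivial
      · show (K1nm m n).Adj (Sum.inr i0) (Sum.inr i)
        show (⊤ : SimpleGraph (Fin n)).Adj i0 i
        rw [SimpleGraph.top_adj]
        exact fun h => hne (by rw [h])
  · have hdisj : Disjoint L R := by
      simp only [hL, hR, Finset.disjoint_left, Finset.mem_map]
      rintro x ⟨a, _, rfl⟩ ⟨b, _, hb⟩
      exact Sum.inl_ne_inr hb.symm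
    rw [Finset.sum_union hdisj, hL, hR, Finset.sum_map, Finset.sum_map]
    simp only [Function.Embedding.coeFn_mk, icf]
    have hLsum : ∑ j ∈ Finset.univ.filter (fun j : Fin m => q.testBit (j : ℕ)),
        ((2 ^ n - 1) * 2 ^ (j : ℕ) + (if (j : ℕ) = m - 1 then 1 else 0))
        = (2 ^ n - 1) * q + (if q.testBit (m - 1) then 1 else 0) := by
      rw [Finset.sum_add_distrib, ← Finset.mul_sum]
      congr 1
      · congr 1
        rw [Finset.sum_filter, Fin.sum_univ_eq_sum_range
          (fun j => if q.testBit j then 2 ^ j else 0), sum_testBit_range,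
          Nat.mod_eq_of_lt hq]
      · rw [Finset.sum_filter, Fin.sum_univ_eq_sum_range
          (fun j => if q.testBit j then (if j = m - 1 then 1 else 0) else 0)]
        have : ∀ j ∈ Finset.range m,
            (if q.testBit j then (if j = m - 1 then 1 else 0) else 0)
            = (if j = m - 1 then (if q.testBit j then 1 else 0) else 0) := by
          intro j _
          by_cases h1 : q.testBit j <;> by_cases h2 : j = m - 1 <;> simp [h1, h2]
        rw [Finset.sum_congr rfl this,
          Finset.sum_ite_eq' (Finset.range m) (m - 1)
            (fun j => if q.testBit j then 1 else 0),
          if_pos (Finset.mem_range.mpr (by omega))]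
    have hRsum : ∑ i ∈ Finset.univ.filter (fun i : Fin n => r.testBit (i : ℕ)),
        2 ^ (i : ℕ) = r := by
      rw [Finset.sum_filter, Fin.sum_univ_eq_sum_range
        (fun i => if r.testBit i then 2 ^ i else 0), sum_testBit_range,
        Nat.mod_eq_of_lt hrn]
    rw [hLsum, hRsum]

/-- For all `m ≥ 1` and `n ≥ 1`,
`M(K_{1(n),m}) ≥ 2^{m+n} − 2^m + 1`. -/
theorem stmt_7 (m n : ℕ) (hm : 1 ≤ m) (hn : 1 ≤ n) :
    2 ^ (m + n) - 2 ^ m + 1 ≤ ICIndex (K1nm m n) := by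
  classical
  have h2n : 2 ≤ 2 ^ n := by
    calc (2:ℕ) = 2 ^ 1 := by norm_num
    _ ≤ 2 ^ n := Nat.pow_le_pow_right (by norm_num) hn
  have h2m1 : 2 ^ m = 2 * 2 ^ (m - 1) := by
    conv_lhs => rw [show m = 1 + (m - 1) by omega]
    rw [pow_add, pow_one]
  have h2mpos : 1 ≤ 2 ^ (m - 1) := Nat.one_le_two_pow
  set N := 2 ^ n - 1 with hNdef
  have hN1 : 1 ≤ N := by omega
  have htot : ∑ v, icf m n v = N * 2 ^ m + 1 := icf_total m n hm
  -- testBit helper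
  have hbit : ∀ q : ℕ, 2 ^ (m - 1) ≤ q → q < 2 ^ m → q.testBit (m - 1) = true := by
    intro q hlo hhi
    have hdiv : q / 2 ^ (m - 1) = 1 := by
      apply Nat.div_eq_of_lt_le
      · simpa using hlo
      · omega
    rw [Nat.testBit_eq_decide_div_mod_eq, hdiv]
    simp
  have hIC : IsICColoring (K1nm m n) (icf m n) := by
    constructor
    · rintro (j | i)
      · have : 1 * 1 ≤ (2 ^ n - 1) * 2 ^ (j : ℕ) :=
          Nat.mul_le_mul (by omega) Nat.one_le_two_pow
        simp only [icf]
        omega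
      · exact Nat.pow_pos (by norm_num)
    · intro k hk1 hk2
      rw [htot] at hk2
      obtain ⟨q0, r0, hdiv, hr0⟩ : ∃ q0 r0, N * q0 + r0 = k - 1 ∧ r0 < N :=
        ⟨(k - 1) / N, (k - 1) % N, Nat.div_add_mod (k - 1) N, Nat.mod_lt _ (by omega)⟩
      have hq0le : q0 ≤ 2 ^ m := by
        by_contra h
        push_neg at h
        have : N * (2 ^ m + 1) ≤ N * q0 := Nat.mul_le_mul_left _ (by omega)
        have h2 : N * (2 ^ m + 1) = N * 2 ^ m + N := by ring
        omega
      by_cases hA : q0 < 2 ^ (m - 1)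
      · -- bit is 0, use q = q0, r = r0 + 1
        have hbf : q0.testBit (m - 1) = false := Nat.testBit_eq_false_of_lt hA
        obtain ⟨S, hne, hc, hs⟩ := icf_cover m n q0 (r0 + 1) hm
          (by omega) (by omega) (by omega)
        refine ⟨S, hne, hc, ?_⟩
        rw [hs]
        simp only [hbf, Bool.false_eq_true, if_false, ← hNdef]
        omega
      · push_neg at hA
        by_cases hr0z : r0 = 0
        · by_cases hq0eq : q0 = 2 ^ (m - 1)
          · -- singleton case: k = N * 2^(m-1) + 1
            refine ⟨{Sum.inl ⟨m - 1, by omega⟩}, Finset.singleton_nonempty _, ?_, ?_⟩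
            · apply induce_connected_of_hub _ _ (Sum.inl ⟨m - 1, by omega⟩)
              · simp
              · intro v hv hne
                simp only [Finset.coe_singleton, Set.mem_singleton_iff] at hv
                exact absurd hv hne
            · rw [Finset.sum_singleton]
              have hval : icf m n (Sum.inl ⟨m - 1, by omega⟩)
                  = (2 ^ n - 1) * 2 ^ (m - 1) + 1 := by simp [icf]
              rw [hq0eq] at hdiv
              rw [hval, ← hNdef]
              omega
          · -- q = q0 - 1, r = N
            have hq0gt : 2 ^ (m - 1) < q0 := lt_of_le_of_ne hA (Ne.symm hq0eq)
            have hbt : (q0 - 1).testBit (m - 1) = true :=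
              hbit _ (by omega) (by omega)
            obtain ⟨S, hne, hc, hs⟩ := icf_cover m n (q0 - 1) N hm
              (by omega) hN1 (by omega)
            refine ⟨S, hne, hc, ?_⟩
            rw [hs]
            simp only [hbt, if_true, ← hNdef]
            have hmul : N * (q0 - 1) + N = N * q0 := by
              have : q0 - 1 + 1 = q0 := by omega
              calc N * (q0 - 1) + N = N * ((q0 - 1) + 1) := by ring
              _ = N * q0 := by rw [this]
            omega
        · -- q = q0, r = r0, bit 1
          have hq0lt : q0 < 2 ^ m := by
            rcases Nat.lt_or_ge q0 (2 ^ m) with h | h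
            · exact h
            · exfalso
              have : q0 = 2 ^ m := le_antisymm hq0le h
              subst this
              omega
          have hbt : q0.testBit (m - 1) = true := hbit _ hA hq0lt
          obtain ⟨S, hne, hc, hs⟩ := icf_cover m n q0 r0 hm hq0lt
            (by omega) (by omega)
          refine ⟨S, hne, hc, ?_⟩
          rw [hs]
          simp only [hbt, if_true, ← hNdef]
          omega
  have hmem : N * 2 ^ m + 1 ∈
      {t | ∃ f : Fin m ⊕ Fin n → ℕ, IsICColoring (K1nm m n) f ∧ ∑ v, f v = t} :=
    ⟨icf m n, hIC, htot⟩
  have hle : N * 2 ^ m + 1 ≤ ICIndex (K1nm m n) :=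
    le_csSup (icIndex_bddAbove _) hmem
  have harith : 2 ^ (m + n) - 2 ^ m + 1 = N * 2 ^ m + 1 := by
    have : 2 ^ (m + n) = 2 ^ m * 2 ^ n := pow_add 2 m n
    have hsub : N * 2 ^ m = 2 ^ m * 2 ^ n - 2 ^ m := by
      rw [hNdef, Nat.sub_mul, one_mul, mul_comm]
    omega
  rw [harith]
  exact hle
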